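/- Let G₁, G₂ be graphs of orders n₁, n₂ with minimum degrees δ₁, δ₂, and let k_i > −δ_i for i ∈ {1,2}. Then for every k ≥ k₁ + k₂ − 1, φ_k^p(G₁ □ G₂) ≥ φ_{k₁}^p(G₁)·φ_{k₂}^p(G₂) + min{n₁ − φ_{k₁}^p(G₁), n₂ − φ_{k₂}^p(G₂)}, where φ_k^p(G) is the maximum cardinality of a powerful k-alliance free set in G. -/
import Mathlib


open Classical

/-- Number of neighbors of `v` inside `S`. -/
noncomputable def dS {V : Type*} (G : SimpleGraph V) (S : Set V) (v : V) : ℕ :=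
  {u ∈ S | G.Adj v u}.ncard

/-- `S` is a defensive `k`-alliance. -/
def IsDefAlliance {V : Type*} (G : SimpleGraph V) (k : ℤ) (S : Set V) : Prop :=
  S.Nonempty ∧ ∀ v ∈ S, (dS G S v : ℤ) ≥ (dS G Sᶜ v : ℤ) + k

/-- `X` is a defensive `k`-alliance free set. -/
def IsDafFree {V : Type*} (G : SimpleGraph V) (k : ℤ) (X : Set V) : Prop :=
  ∀ S : Set V, S ⊆ X → ¬ IsDefAlliance G k S

/-- Boundary: vertices outside `S` with a neighbor in `S`. -/
def obdry {V : Type*} (G : SimpleGraph V) (S : Set V) : Set V :=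
  {v | v ∉ S ∧ ∃ u ∈ S, G.Adj v u}

/-- `S` is an offensive `k`-alliance. -/
def IsOffAlliance {V : Type*} (G : SimpleGraph V) (k : ℤ) (S : Set V) : Prop :=
  S.Nonempty ∧ ∀ v ∈ obdry G S, (dS G S v : ℤ) ≥ (dS G Sᶜ v : ℤ) + k

/-- `X` is an offensive `k`-alliance free set. -/
def IsOafFree {V : Type*} (G : SimpleGraph V) (k : ℤ) (X : Set V) : Prop :=
  ∀ S : Set V, S ⊆ X → ¬ IsOffAlliance G k S

/-- `S` is a powerful `k`-alliance. -/
def IsPowAlliance {V : Type*} (G : SimpleGraph V) (k : ℤ) (S : Set V) : Prop :=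
  IsDefAlliance G k S ∧ IsOffAlliance G (k + 2) S

/-- `X` is a powerful `k`-alliance free set. -/
def IsPafFree {V : Type*} (G : SimpleGraph V) (k : ℤ) (X : Set V) : Prop :=
  ∀ S : Set V, S ⊆ X → ¬ IsPowAlliance G k S

/-- Maximum cardinality of a defensive `k`-alliance free set. -/
noncomputable def phiD {V : Type*} (G : SimpleGraph V) (k : ℤ) : ℕ :=
  sSup {n : ℕ | ∃ X : Set V, IsDafFree G k X ∧ X.ncard = n}

/-- Maximum cardinality of an offensive `k`-alliance free set. -/
noncomputable def phiO {V : Type*} (G : SimpleGraph V) (k : ℤ) : ℕ :=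
  sSup {n : ℕ | ∃ X : Set V, IsOafFree G k X ∧ X.ncard = n}

/-- Maximum cardinality of a powerful `k`-alliance free set. -/
noncomputable def phiP {V : Type*} (G : SimpleGraph V) (k : ℤ) : ℕ :=
  sSup {n : ℕ | ∃ X : Set V, IsPafFree G k X ∧ X.ncard = n}

section Aux
variable {V : Type*} [Fintype V]

lemma dS_add_compl (G : SimpleGraph V) [DecidableRel G.Adj] (S : Set V) (v : V) :
    dS G S v + dS G Sᶜ v = G.degree v := by
  classical
  have h1 : {u ∈ S | G.Adj v u} ∪ {u ∈ Sᶜ | G.Adj v u} = G.neighborSet v := by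
    ext u; by_cases hu : u ∈ S <;> simp [hu, SimpleGraph.mem_neighborSet]
  have hd : Disjoint {u ∈ S | G.Adj v u} {u ∈ Sᶜ | G.Adj v u} := by
    rw [Set.disjoint_left]; rintro u ⟨hu, -⟩ ⟨hu', -⟩; exact hu' hu
  have := Set.ncard_union_eq hd (Set.toFinite _) (Set.toFinite _)
  rw [h1] at this
  rw [dS, dS, ← this]
  rw [Set.ncard_eq_toFinset_card' (G.neighborSet v), ← SimpleGraph.neighborFinset_def]
  rfl

lemma dS_mono (G : SimpleGraph V) {S T : Set V} (h : S ⊆ T) (v : V) :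
    dS G S v ≤ dS G T v :=
  Set.ncard_le_ncard (fun u hu => ⟨h hu.1, hu.2⟩) (Set.toFinite _)

lemma dS_subsingleton (G : SimpleGraph V) {S : Set V} {v : V} (h : S ⊆ {v}) :
    dS G S v = 0 := by
  have : {u ∈ S | G.Adj v u} = ∅ := by
    ext u; simp only [Set.mem_setOf_eq, Set.mem_empty_iff_false, iff_false, not_and]
    intro hu hadj; exact G.irrefl ((h hu) ▸ hadj)
  rw [dS, this, Set.ncard_empty]

end Aux

lemma dS_boxProd {V₁ V₂ : Type*} [Fintype V₁] [Fintype V₂]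
    (G₁ : SimpleGraph V₁) (G₂ : SimpleGraph V₂) (S : Set (V₁ × V₂)) (a : V₁) (b : V₂) :
    dS (G₁.boxProd G₂) S (a, b)
      = dS G₁ {a' | (a', b) ∈ S} a + dS G₂ {b' | (a, b') ∈ S} b := by
  classical
  have h1 : {u ∈ S | (G₁.boxProd G₂).Adj (a, b) u}
      = ((fun a' => (a', b)) '' {u ∈ {a' | (a', b) ∈ S} | G₁.Adj a u})
        ∪ ((fun b' => (a, b')) '' {u ∈ {b' | (a, b') ∈ S} | G₂.Adj b u}) := by
    ext ⟨x, y⟩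
    simp only [Set.mem_setOf_eq, SimpleGraph.boxProd_adj, Set.mem_union, Set.mem_image,
      Prod.mk.injEq]
    constructor
    · rintro ⟨hS, (⟨hadj, rfl⟩ | ⟨hadj, rfl⟩)⟩
      · exact Or.inl ⟨x, ⟨hS, hadj⟩, rfl, rfl⟩
      · exact Or.inr ⟨y, ⟨hS, hadj⟩, rfl, rfl⟩
    · rintro (⟨x', ⟨hS, hadj⟩, rfl, rfl⟩ | ⟨y', ⟨hS, hadj⟩, rfl, rfl⟩)
      · exact ⟨hS, Or.inl ⟨hadj, rfl⟩⟩
      · exact ⟨hS, Or.inr ⟨hadj, rfl⟩⟩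
  have hd : Disjoint ((fun a' => (a', b)) '' {u ∈ {a' | (a', b) ∈ S} | G₁.Adj a u})
      ((fun b' => (a, b')) '' {u ∈ {b' | (a, b') ∈ S} | G₂.Adj b u}) := by
    rw [Set.disjoint_left]
    rintro ⟨x, y⟩ ⟨x', ⟨-, hadj⟩, hx⟩ ⟨y', ⟨-, hadj'⟩, hy⟩
    simp only [Prod.mk.injEq] at hx hy
    obtain ⟨h1, -⟩ := hx
    obtain ⟨h2, -⟩ := hy
    subst h1; rw [← h2] at hadj; exact G₁.irrefl hadj
  rw [dS, h1, Set.ncard_union_eq hd (Set.toFinite _) (Set.toFinite _),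
    Set.ncard_image_of_injective _ (fun x y h => (Prod.ext_iff.mp h).1),
    Set.ncard_image_of_injective _ (fun x y h => (Prod.ext_iff.mp h).2)]
  rfl

lemma ncard_prod' {α β : Type*} [Fintype α] [Fintype β] (s : Set α) (t : Set β) :
    (s ×ˢ t).ncard = s.ncard * t.ncard := by
  classical
  rw [Set.ncard_eq_toFinset_card', Set.ncard_eq_toFinset_card', Set.ncard_eq_toFinset_card',
    Set.toFinset_prod, Finset.card_product]

lemma pafFree_empty {V : Type*} (G : SimpleGraph V) (k : ℤ) : IsPafFree G k ∅ := by
  rintro S hS ⟨⟨⟨v, hv⟩, -⟩, -⟩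
  exact (hS hv).elim

lemma pafFree_card_le {V : Type*} [Fintype V] {G : SimpleGraph V} {k : ℤ} {X : Set V}
    (_ : IsPafFree G k X) : X.ncard ≤ Fintype.card V := by
  have := Set.ncard_le_ncard (Set.subset_univ X) (Set.toFinite _)
  rwa [Set.ncard_univ, Nat.card_eq_fintype_card] at this

lemma phiP_bddAbove {V : Type*} [Fintype V] (G : SimpleGraph V) (k : ℤ) :
    BddAbove {n : ℕ | ∃ X : Set V, IsPafFree G k X ∧ X.ncard = n} := by
  refine ⟨Fintype.card V, ?_⟩
  rintro n ⟨X, hX, rfl⟩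
  exact pafFree_card_le hX

lemma phiP_spec {V : Type*} [Fintype V] (G : SimpleGraph V) (k : ℤ) :
    ∃ X : Set V, IsPafFree G k X ∧ X.ncard = phiP G k := by
  have hne : {n : ℕ | ∃ X : Set V, IsPafFree G k X ∧ X.ncard = n}.Nonempty :=
    ⟨0, ∅, pafFree_empty G k, Set.ncard_empty _⟩
  exact Nat.sSup_mem hne (phiP_bddAbove G k)

lemma le_phiP {V : Type*} [Fintype V] {G : SimpleGraph V} {k : ℤ} {X : Set V}
    (hX : IsPafFree G k X) : X.ncard ≤ phiP G k :=
  le_csSup (phiP_bddAbove G k) ⟨X, hX, rfl⟩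

lemma construction_free {V₁ V₂ : Type*} [Fintype V₁] [Fintype V₂]
    (G₁ : SimpleGraph V₁) (G₂ : SimpleGraph V₂)
    [DecidableRel G₁.Adj] [DecidableRel G₂.Adj]
    (k₁ k₂ k : ℤ)
    (hδ₁ : 1 ≤ (G₁.minDegree : ℤ) + k₁) (hδ₂ : 1 ≤ (G₂.minDegree : ℤ) + k₂)
    (hk : k₁ + k₂ - 1 ≤ k)
    {X₁ : Set V₁} {X₂ : Set V₂} (hX₁ : IsPafFree G₁ k₁ X₁) (hX₂ : IsPafFree G₂ k₂ X₂)
    {Δ : Set (V₁ × V₂)}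
    (hΔ : ∀ p ∈ Δ, p.1 ∉ X₁ ∧ p.2 ∉ X₂)
    (hrow : ∀ p ∈ Δ, ∀ q ∈ Δ, p.2 = q.2 → p = q)
    (hcol : ∀ p ∈ Δ, ∀ q ∈ Δ, p.1 = q.1 → p = q) :
    IsPafFree (G₁.boxProd G₂) k (X₁ ×ˢ X₂ ∪ Δ) := by
  rintro S hSX ⟨⟨hSne, hdef⟩, -, hoff⟩
  have hdec : ∀ a b, dS (G₁.boxProd G₂) S (a, b)
      = dS G₁ {a' | (a', b) ∈ S} a + dS G₂ {b' | (a, b') ∈ S} b :=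
    fun a b => dS_boxProd G₁ G₂ S a b
  have hdecc : ∀ a b, dS (G₁.boxProd G₂) Sᶜ (a, b)
      = dS G₁ {a' | (a', b) ∈ S}ᶜ a + dS G₂ {b' | (a, b') ∈ S}ᶜ b :=
    fun a b => dS_boxProd G₁ G₂ Sᶜ a b
  -- Step 1: S avoids Δ
  have hSsub : S ⊆ X₁ ×ˢ X₂ := by
    intro p hp
    rcases hSX hp with h | h
    · exact h
    exfalso
    obtain ⟨y, b⟩ := p
    have hRsub : {a' | (a', b) ∈ S} ⊆ {y} := by
      intro a ha
      rcases hSX ha with h' | h'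
      · exact absurd h'.2 (hΔ _ h).2
      · have := hrow _ h' _ h rfl
        simpa using congrArg Prod.fst this
    have hCsub : {b' | (y, b') ∈ S} ⊆ {b} := by
      intro b' hb'
      rcases hSX hb' with h' | h'
      · exact absurd h'.1 (hΔ _ h).1
      · have := hcol _ h' _ h rfl
        simpa using congrArg Prod.snd this
    have h0 : dS G₁ {a' | (a', b) ∈ S} y = 0 := dS_subsingleton G₁ hRsub
    have h0' : dS G₂ {b' | (y, b') ∈ S} b = 0 := dS_subsingleton G₂ hCsub
    have hD := hdef (y, b) hp
    rw [hdec, hdecc] at hD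
    have e1 := dS_add_compl G₁ {a' | (a', b) ∈ S} y
    have e2 := dS_add_compl G₂ {b' | (y, b') ∈ S} b
    have m1 := G₁.minDegree_le_degree y
    have m2 := G₂.minDegree_le_degree b
    omega
  -- Step 2: the projection P
  set P : Set V₂ := {b | ∃ a, (a, b) ∈ S} with hPdef
  have hPX₂ : P ⊆ X₂ := by rintro b ⟨a, haS⟩; exact (hSsub haS).2
  have hPne : P.Nonempty := by obtain ⟨⟨a, b⟩, h⟩ := hSne; exact ⟨b, a, h⟩
  -- Step 3: P always satisfies the offensive (k₂+2) condition
  have hPoff : ∀ b' ∈ obdry G₂ P, (dS G₂ P b' : ℤ) ≥ (dS G₂ Pᶜ b' : ℤ) + (k₂ + 2) := by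
    rintro b' ⟨hb'P, b, hbP, hadj⟩
    obtain ⟨a, haS⟩ := hbP
    have hbd : (a, b') ∈ obdry (G₁.boxProd G₂) S := by
      refine ⟨fun hmem => hb'P ⟨a, hmem⟩, (a, b), haS, ?_⟩
      exact SimpleGraph.boxProd_adj.mpr (Or.inr ⟨hadj, rfl⟩)
    have hO := hoff _ hbd
    rw [hdec, hdecc] at hO
    have hR0 : dS G₁ {a' | (a', b') ∈ S} a = 0 :=
      dS_subsingleton G₁ (fun a'' h => absurd ⟨a'', h⟩ hb'P)
    have hCP : dS G₂ {b'' | (a, b'') ∈ S} b' ≤ dS G₂ P b' :=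
      dS_mono G₂ (by intro b'' h; exact ⟨a, h⟩) b'
    have e1 := dS_add_compl G₁ {a' | (a', b') ∈ S} a
    have e2 := dS_add_compl G₂ {b'' | (a, b'') ∈ S} b'
    have e3 := dS_add_compl G₂ P b'
    have m1 := G₁.minDegree_le_degree a
    omega
  -- Step 4: so P must fail defensiveness at some b₀
  have hPnotdef : ¬ IsDefAlliance G₂ k₂ P :=
    fun h => hX₂ P hPX₂ ⟨h, hPne, hPoff⟩
  have hb₀ex : ∃ b₀ ∈ P, ¬((dS G₂ P b₀ : ℤ) ≥ (dS G₂ Pᶜ b₀ : ℤ) + k₂) := by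
    by_contra hcon
    push_neg at hcon
    exact hPnotdef ⟨hPne, hcon⟩
  obtain ⟨b₀, hb₀P, hb₀⟩ := hb₀ex
  push_neg at hb₀
  -- Step 5: the fiber over b₀ is a powerful k₁-alliance in G₁
  refine hX₁ {a | (a, b₀) ∈ S} (fun a ha => (hSsub ha).1) ⟨⟨?_, ?_⟩, ?_, ?_⟩
  · obtain ⟨a, ha⟩ := hb₀P; exact ⟨a, ha⟩
  · intro a haS
    have hD := hdef (a, b₀) haS
    rw [hdec, hdecc] at hD
    have hCP : dS G₂ {b'' | (a, b'') ∈ S} b₀ ≤ dS G₂ P b₀ :=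
      dS_mono G₂ (by intro b'' h; exact ⟨a, h⟩) b₀
    have e1 := dS_add_compl G₁ {a' | (a', b₀) ∈ S} a
    have e2 := dS_add_compl G₂ {b'' | (a, b'') ∈ S} b₀
    have e3 := dS_add_compl G₂ P b₀
    omega
  · obtain ⟨a, ha⟩ := hb₀P; exact ⟨a, ha⟩
  · rintro a' ⟨ha'R, u, huR, hadj⟩
    have hbd : (a', b₀) ∈ obdry (G₁.boxProd G₂) S := by
      refine ⟨fun hmem => ha'R hmem, (u, b₀), huR, ?_⟩
      exact SimpleGraph.boxProd_adj.mpr (Or.inl ⟨hadj, rfl⟩)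
    have hO := hoff _ hbd
    rw [hdec, hdecc] at hO
    have hCP : dS G₂ {b'' | (a', b'') ∈ S} b₀ ≤ dS G₂ P b₀ :=
      dS_mono G₂ (by intro b'' h; exact ⟨a', h⟩) b₀
    have e1 := dS_add_compl G₁ {a'' | (a'', b₀) ∈ S} a'
    have e2 := dS_add_compl G₂ {b'' | (a', b'') ∈ S} b₀
    have e3 := dS_add_compl G₂ P b₀
    omega

theorem stmt19 {V₁ V₂ : Type*} [Fintype V₁] [Fintype V₂] [Nonempty V₁] [Nonempty V₂]
    (G₁ : SimpleGraph V₁) (G₂ : SimpleGraph V₂)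
    [DecidableRel G₁.Adj] [DecidableRel G₂.Adj]
    (k₁ k₂ k : ℤ)
    (hk₁ : -(G₁.minDegree : ℤ) < k₁) (hk₂ : -(G₂.minDegree : ℤ) < k₂)
    (hk : k₁ + k₂ - 1 ≤ k) :
    phiP (G₁.boxProd G₂) k ≥
      phiP G₁ k₁ * phiP G₂ k₂ +
        min (Fintype.card V₁ - phiP G₁ k₁) (Fintype.card V₂ - phiP G₂ k₂) := by
  obtain ⟨X₁, hX₁, hc₁⟩ := phiP_spec G₁ k₁
  obtain ⟨X₂, hX₂, hc₂⟩ := phiP_spec G₂ k₂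
  have hδk₁ : 1 ≤ (G₁.minDegree : ℤ) + k₁ := by omega
  have hδk₂ : 1 ≤ (G₂.minDegree : ℤ) + k₂ := by omega
  have hcc₁ : X₁.ncard + X₁ᶜ.ncard = Fintype.card V₁ := by
    rw [Set.ncard_add_ncard_compl X₁ (Set.toFinite _) (Set.toFinite _),
      Nat.card_eq_fintype_card]
  have hcc₂ : X₂.ncard + X₂ᶜ.ncard = Fintype.card V₂ := by
    rw [Set.ncard_add_ncard_compl X₂ (Set.toFinite _) (Set.toFinite _),
      Nat.card_eq_fintype_card]
  have hY₁ : X₁ᶜ.ncard = Fintype.card V₁ - phiP G₁ k₁ := by omega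
  have hY₂ : X₂ᶜ.ncard = Fintype.card V₂ - phiP G₂ k₂ := by omega
  rcases le_total (Fintype.card V₁ - phiP G₁ k₁) (Fintype.card V₂ - phiP G₂ k₂) with hmin | hmin
  · -- inject X₁ᶜ into X₂ᶜ
    have hencard : X₁ᶜ.encard ≤ X₂ᶜ.encard := by
      rw [← (Set.toFinite X₁ᶜ).cast_ncard_eq, ← (Set.toFinite X₂ᶜ).cast_ncard_eq]
      exact_mod_cast hY₁ ▸ hY₂ ▸ hmin
    obtain ⟨f, hfmaps, hfinj⟩ :=
      Set.Finite.exists_injOn_of_encard_le (Set.toFinite X₁ᶜ) hencard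
    set Δ : Set (V₁ × V₂) := (fun y => (y, f y)) '' X₁ᶜ with hΔdef
    have hfree : IsPafFree (G₁.boxProd G₂) k (X₁ ×ˢ X₂ ∪ Δ) := by
      refine construction_free G₁ G₂ k₁ k₂ k hδk₁ hδk₂ hk hX₁ hX₂ ?_ ?_ ?_
      · rintro p ⟨y, hy, rfl⟩; exact ⟨hy, hfmaps hy⟩
      · rintro p ⟨y, hy, rfl⟩ q ⟨y', hy', rfl⟩ h
        simp only at h
        rw [hfinj hy hy' h]
      · rintro p ⟨y, hy, rfl⟩ q ⟨y', hy', rfl⟩ h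
        simp only at h
        rw [h]
    have hdisj : Disjoint (X₁ ×ˢ X₂) Δ := by
      rw [Set.disjoint_left]
      rintro p hp ⟨y, hy, rfl⟩
      exact hy hp.1
    have hcard : (X₁ ×ˢ X₂ ∪ Δ).ncard
        = phiP G₁ k₁ * phiP G₂ k₂ + (Fintype.card V₁ - phiP G₁ k₁) := by
      rw [Set.ncard_union_eq hdisj (Set.toFinite _) (Set.toFinite _), ncard_prod', hc₁, hc₂,
        hΔdef, Set.ncard_image_of_injective _ (fun x y h => (Prod.ext_iff.mp h).1), hY₁]
    have := le_phiP hfree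
    rw [hcard] at this
    rw [min_eq_left hmin]
    exact this
  · -- inject X₂ᶜ into X₁ᶜ
    have hencard : X₂ᶜ.encard ≤ X₁ᶜ.encard := by
      rw [← (Set.toFinite X₁ᶜ).cast_ncard_eq, ← (Set.toFinite X₂ᶜ).cast_ncard_eq]
      exact_mod_cast hY₁ ▸ hY₂ ▸ hmin
    obtain ⟨f, hfmaps, hfinj⟩ :=
      Set.Finite.exists_injOn_of_encard_le (Set.toFinite X₂ᶜ) hencard
    set Δ : Set (V₁ × V₂) := (fun y => (f y, y)) '' X₂ᶜ with hΔdef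
    have hfree : IsPafFree (G₁.boxProd G₂) k (X₁ ×ˢ X₂ ∪ Δ) := by
      refine construction_free G₁ G₂ k₁ k₂ k hδk₁ hδk₂ hk hX₁ hX₂ ?_ ?_ ?_
      · rintro p ⟨y, hy, rfl⟩; exact ⟨hfmaps hy, hy⟩
      · rintro p ⟨y, hy, rfl⟩ q ⟨y', hy', rfl⟩ h
        simp only at h
        rw [h]
      · rintro p ⟨y, hy, rfl⟩ q ⟨y', hy', rfl⟩ h
        simp only at h
        rw [hfinj hy hy' h]
    have hdisj : Disjoint (X₁ ×ˢ X₂) Δ := by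
      rw [Set.disjoint_left]
      rintro p hp ⟨y, hy, rfl⟩
      exact hy hp.2
    have hcard : (X₁ ×ˢ X₂ ∪ Δ).ncard
        = phiP G₁ k₁ * phiP G₂ k₂ + (Fintype.card V₂ - phiP G₂ k₂) := by
      rw [Set.ncard_union_eq hdisj (Set.toFinite _) (Set.toFinite _), ncard_prod', hc₁, hc₂,
        hΔdef, Set.ncard_image_of_injective _ (fun x y h => (Prod.ext_iff.mp h).2), hY₂]
    have := le_phiP hfree
    rw [hcard] at this
    rw [min_eq_right hmin]
    exact this
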